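/- For every integer m ≥ 0, ∫_{−2}^{2} y^{2m} √(4 − y²)/(2π) dy = C_m, the m-th Catalan number, and all odd moments of the semicircle density on [−2,2] vanish. -/

import Mathlib

open Real MeasureTheory intervalIntegral Set

noncomputable def semiI (m : ℕ) : ℝ := ∫ y in (-2 : ℝ)..2, y ^ (2 * m) * Real.sqrt (4 - y ^ 2)

lemma cont_integrand (k : ℕ) : Continuous fun y : ℝ => y ^ k * Real.sqrt (4 - y ^ 2) := by
  exact (continuous_pow k).mul (Real.continuous_sqrt.comp (by continuity))

lemma semiI_zero : semiI 0 = 2 * π := by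
  have h := integral_comp_mul_left (a := (-1:ℝ)) (b := 1)
      (fun y : ℝ => Real.sqrt (4 - y ^ 2)) (c := (2:ℝ)) two_ne_zero
  have h2 : (∫ x in (-1:ℝ)..1, Real.sqrt (4 - (2*x) ^ 2))
      = ∫ x in (-1:ℝ)..1, 2 * Real.sqrt (1 - x ^ 2) := by
    apply intervalIntegral.integral_congr
    intro x _
    simp only
    have h4 : (4 : ℝ) - (2*x)^2 = 4 * (1 - x^2) := by ring
    rw [h4, Real.sqrt_mul (by norm_num), show Real.sqrt 4 = 2 by
      rw [show (4:ℝ) = 2^2 by norm_num, Real.sqrt_sq (by norm_num)]]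
  rw [h2, intervalIntegral.integral_const_mul, integral_sqrt_one_sub_sq] at h
  have h3 : (2:ℝ) * (π/2) = (2:ℝ)⁻¹ * ∫ y in (-2:ℝ)..2, Real.sqrt (4 - y^2) := by
    simpa [smul_eq_mul] using h
  unfold semiI
  simp only [mul_zero, pow_zero, one_mul]
  linarith

lemma integrable_integrand (k : ℕ) :
    IntervalIntegrable (fun y : ℝ => y ^ k * Real.sqrt (4 - y ^ 2)) volume (-2) 2 :=
  (cont_integrand k).intervalIntegrable _ _

lemma semiI_succ (m : ℕ) :
    (2 * (m:ℝ) + 4) * semiI (m + 1) = 4 * (2 * m + 1) * semiI m := by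
  set u : ℝ → ℝ := fun y => y ^ (2 * m + 1) with hu_def
  set u' : ℝ → ℝ := fun y => (2 * m + 1 : ℕ) * y ^ (2 * m) with hu'_def
  set v : ℝ → ℝ := fun y => -(1/3) * ((4 - y ^ 2) * Real.sqrt (4 - y ^ 2)) with hv_def
  set v' : ℝ → ℝ := fun y => y * Real.sqrt (4 - y ^ 2) with hv'_def
  have hucont : Continuous u := continuous_pow _
  have hvcont : Continuous v := by
    apply Continuous.mul continuous_const
    exact (by continuity : Continuous fun y : ℝ => 4 - y ^ 2).mul
      (Real.continuous_sqrt.comp (by continuity))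
  have hu'int : IntervalIntegrable u' volume (-2) 2 :=
    ((continuous_const.mul (continuous_pow _)) : Continuous u').intervalIntegrable _ _
  have hv'int : IntervalIntegrable v' volume (-2) 2 :=
    ((continuous_id.mul (Real.continuous_sqrt.comp (by continuity))) :
      Continuous v').intervalIntegrable _ _
  have huderiv : ∀ x ∈ Set.Ioo (min (-2:ℝ) 2) (max (-2:ℝ) 2), HasDerivAt u (u' x) x := by
    intro x _
    have := hasDerivAt_pow (2 * m + 1) x
    simp only [hu_def, hu'_def]
    convert this using 1
    · rfl
    · simp
  have hvderiv : ∀ x ∈ Set.Ioo (min (-2:ℝ) 2) (max (-2:ℝ) 2), HasDerivAt v (v' x) x := by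
    intro x hx
    simp only [min_eq_left, max_eq_right, (by norm_num : (-2:ℝ) ≤ 2), Set.mem_Ioo] at hx
    have hpos : (0:ℝ) < 4 - x ^ 2 := by nlinarith [hx.1, hx.2]
    have hs : HasDerivAt (fun y : ℝ => 4 - y ^ 2) (-(2 * x)) x := by
      simpa using ((hasDerivAt_pow 2 x).const_sub 4)
    have hsq : HasDerivAt (fun y : ℝ => Real.sqrt (4 - y ^ 2))
        (1 / (2 * Real.sqrt (4 - x ^ 2)) * (-(2 * x))) x :=
      (Real.hasDerivAt_sqrt (ne_of_gt hpos)).comp x hs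
    have hprod := (hs.mul hsq).const_mul (-(1/3 : ℝ))
    convert hprod using 1
    any_goals rfl
    have hsq4 : Real.sqrt (4 - x ^ 2) * Real.sqrt (4 - x ^ 2) = 4 - x ^ 2 :=
      Real.mul_self_sqrt (le_of_lt hpos)
    have hsne : Real.sqrt (4 - x ^ 2) ≠ 0 := by positivity
    rw [hv'_def]
    field_simp [hv'_def]
    nlinarith [hsq4]
  have hparts := intervalIntegral.integral_mul_deriv_eq_deriv_mul_of_hasDerivAt
    (u := u) (v := v) (u' := u') (v' := v') (a := (-2:ℝ)) (b := 2)
    hucont.continuousOn hvcont.continuousOn huderiv hvderiv hu'int hv'int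
  have hv2 : v 2 = 0 := by simp [hv_def]; norm_num
  have hvm2 : v (-2) = 0 := by simp [hv_def]; norm_num
  have hlhs : (∫ x in (-2:ℝ)..2, u x * v' x) = semiI (m + 1) := by
    unfold semiI
    apply intervalIntegral.integral_congr
    intro x _
    simp only [hu_def, hv'_def]
    ring
  have hrhs : (∫ x in (-2:ℝ)..2, u' x * v x)
      = -(1/3) * ((2 * m + 1 : ℝ)) * (4 * semiI m - semiI (m + 1)) := by
    have : (∫ x in (-2:ℝ)..2, u' x * v x)
        = ∫ x in (-2:ℝ)..2, (-(1/3) * (2 * m + 1 : ℝ)) *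
            (4 * (x ^ (2 * m) * Real.sqrt (4 - x ^ 2))
              - x ^ (2 * (m + 1)) * Real.sqrt (4 - x ^ 2)) := by
      apply intervalIntegral.integral_congr
      intro x _
      simp only [hu'_def, hv_def]
      push_cast
      ring
    rw [this, intervalIntegral.integral_const_mul,
      intervalIntegral.integral_sub ((integrable_integrand (2 * m)).const_mul 4)
        (integrable_integrand (2 * (m + 1))),
      intervalIntegral.integral_const_mul]
    unfold semiI
    ring
  rw [hlhs, hv2, hvm2, hrhs] at hparts
  have := hparts
  nlinarith [this]

lemma catalan_rec (m : ℕ) :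
    (2 * (m:ℝ) + 4) * (catalan (m + 1) : ℝ) = 4 * (2 * m + 1) * (catalan m : ℝ) := by
  have hnat : (m + 1) * ((m + 2) * catalan (m + 1)) = 2 * (2 * m + 1) * ((m + 1) * catalan m) := by
    rw [show m + 2 = (m + 1) + 1 from rfl, succ_mul_catalan_eq_centralBinom,
      succ_mul_catalan_eq_centralBinom]
    calc (m + 1) * (m + 1).centralBinom = 2 * (2 * m + 1) * m.centralBinom :=
          Nat.succ_mul_centralBinom_succ m
      _ = 2 * (2 * m + 1) * m.centralBinom := rfl
  have hreal : ((m:ℝ) + 1) * (((m:ℝ) + 2) * (catalan (m + 1) : ℝ))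
      = 2 * (2 * m + 1) * (((m:ℝ) + 1) * (catalan m : ℝ)) := by
    exact_mod_cast congrArg (Nat.cast : ℕ → ℝ) hnat
  have hm1 : ((m:ℝ) + 1) ≠ 0 := by positivity
  have := mul_left_cancel₀ hm1 (by linarith [hreal] : ((m:ℝ) + 1) * (((m:ℝ) + 2) * (catalan (m + 1) : ℝ)) = ((m:ℝ) + 1) * (2 * (2 * m + 1) * (catalan m : ℝ)))
  linarith [this]

lemma semiI_eq (m : ℕ) : semiI m = 2 * π * (catalan m : ℝ) := by
  induction m with
  | zero => simpa using semiI_zero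
  | succ m ih =>
    have h1 := semiI_succ m
    rw [ih] at h1
    have h2 := catalan_rec m
    have hne : (2 * (m:ℝ) + 4) ≠ 0 := by positivity
    apply mul_left_cancel₀ hne
    rw [h1]
    linear_combination (-(2 * π)) * h2

/-- The even moments of the semicircle density on `[−2,2]` are the Catalan
numbers, `∫_{−2}^{2} y^{2m} √(4 − y²)/(2π) dy = C_m`, and all odd moments vanish. -/
theorem stmt_11 (m : ℕ) :
    (∫ y in (-2 : ℝ)..2, y ^ (2 * m) * Real.sqrt (4 - y ^ 2) / (2 * π)
        = (catalan m : ℝ)) ∧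
    (∫ y in (-2 : ℝ)..2, y ^ (2 * m + 1) * Real.sqrt (4 - y ^ 2) / (2 * π) = 0) := by
  constructor
  · rw [intervalIntegral.integral_div]
    have h := semiI_eq m
    unfold semiI at h
    rw [h]
    field_simp [Real.pi_ne_zero]
  · set f : ℝ → ℝ := fun y => y ^ (2 * m + 1) * Real.sqrt (4 - y ^ 2) / (2 * π) with hf
    have hneg := intervalIntegral.integral_comp_neg (a := (-2:ℝ)) (b := 2) f
    have hodd : (fun x : ℝ => f (-x)) = fun x => -(f x) := by
      funext x
      simp only [hf]
      rw [Odd.neg_pow ⟨m, by ring⟩]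
      ring_nf
    rw [hodd, intervalIntegral.integral_neg] at hneg
    simp only [neg_neg] at hneg
    linarith [hneg]
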